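/- Suppose a rank-k truncated LU factorization satisfies the spectrum-revealing pivoting condition: the leading (k+1)×(k+1) block Ā₁₁ of the partially factored matrix is invertible, ‖Ā₁₁⁻¹‖_max ≤ f/|α|, and every entry of the Schur complement S has absolute value at most |α|. Then ‖Π₁AΠ₂ᵀ − L̂Û‖₂ ≤ √(mn)·f·(k+1)·σ_{k+1}(A). -/

import Mathlib

open Matrix
noncomputable def specNorm {m n : Type*} [Fintype m] [Fintype n] [DecidableEq n]
    (A : Matrix m n ℝ) : ℝ :=
  ‖LinearMap.toContinuousLinearMap (Matrix.toEuclideanLin A)‖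

noncomputable def frobNorm {m n : Type*} [Fintype m] [Fintype n]
    (A : Matrix m n ℝ) : ℝ :=
  Real.sqrt (∑ i, ∑ j, (A i j) ^ 2)

/-- The `j`-th largest singular value of `A` (1-indexed), characterized as the
distance in spectral norm from `A` to the set of matrices of rank `< j`. -/
noncomputable def sval {m n : Type*} [Fintype m] [Fintype n] [DecidableEq n]
    (A : Matrix m n ℝ) (j : ℕ) : ℝ :=
  sInf { c | ∃ B : Matrix m n ℝ, B.rank < j ∧ specNorm (A - B) = c }

lemma euclid_norm_eq {n : Type*} [Fintype n] (v : n → ℝ) :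
    ‖(WithLp.equiv 2 (n → ℝ)).symm v‖ = Real.sqrt (∑ j, (v j) ^ 2) := by
  rw [EuclideanSpace.norm_eq]
  congr 1
  refine Finset.sum_congr rfl fun j _ => ?_
  simp [Real.norm_eq_abs, sq_abs]

lemma mulVec_sq_le {m n : Type*} [Fintype m] [Fintype n] [DecidableEq n]
    (A : Matrix m n ℝ) (v : n → ℝ) :
    Real.sqrt (∑ i, (A.mulVec v i) ^ 2) ≤ specNorm A * Real.sqrt (∑ j, (v j) ^ 2) := by
  have h := (LinearMap.toContinuousLinearMap (Matrix.toEuclideanLin A)).le_opNorm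
    ((WithLp.equiv 2 (n → ℝ)).symm v)
  have h2 : (LinearMap.toContinuousLinearMap (Matrix.toEuclideanLin A))
      ((WithLp.equiv 2 (n → ℝ)).symm v) = (WithLp.equiv 2 (m → ℝ)).symm (A.mulVec v) := by
    simp [Matrix.toLpLin_toLp, Matrix.toLin'_apply]
  rw [h2, euclid_norm_eq, euclid_norm_eq] at h
  exact h

lemma specNorm_le_card_mul {m n : Type*} [Fintype m] [Fintype n] [DecidableEq n]
    (A : Matrix m n ℝ) (c : ℝ) (hc : 0 ≤ c) (h : ∀ i j, |A i j| ≤ c) :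
    specNorm A ≤ Real.sqrt ((Fintype.card m * Fintype.card n : ℕ)) * c := by
  refine ContinuousLinearMap.opNorm_le_bound _
    (mul_nonneg (Real.sqrt_nonneg _) hc) fun x => ?_
  set v : n → ℝ := WithLp.equiv 2 (n → ℝ) x with hv
  have hx : x = (WithLp.equiv 2 (n → ℝ)).symm v := by simp [hv]
  have h2 : (LinearMap.toContinuousLinearMap (Matrix.toEuclideanLin A)) x
      = (WithLp.equiv 2 (m → ℝ)).symm (A.mulVec v) := by
    rw [hx]; simp [Matrix.toLpLin_toLp, Matrix.toLin'_apply]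
  rw [h2, euclid_norm_eq, hx, euclid_norm_eq]
  set s2 := ∑ j, (v j) ^ 2 with hs2
  have hs2nn : 0 ≤ s2 := Finset.sum_nonneg fun j _ => sq_nonneg _
  have key : ∑ i, (A.mulVec v i) ^ 2 ≤
      (Fintype.card m * Fintype.card n : ℕ) * (c ^ 2 * s2) := by
    have hper : ∀ i, (A.mulVec v i) ^ 2 ≤ (Fintype.card n : ℝ) * c ^ 2 * s2 := by
      intro i
      have h1 : (A.mulVec v i) ^ 2 ≤ (∑ j, (A i j) ^ 2) * s2 := by
        simpa [Matrix.mulVec, dotProduct] using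
          Finset.sum_mul_sq_le_sq_mul_sq Finset.univ (A i) v
      have h2 : ∑ j, (A i j) ^ 2 ≤ (Fintype.card n : ℝ) * c ^ 2 := by
        calc ∑ j, (A i j) ^ 2 ≤ ∑ _j : n, c ^ 2 := by
              refine Finset.sum_le_sum fun j _ => ?_
              calc (A i j) ^ 2 = |A i j| ^ 2 := (sq_abs _).symm
                _ ≤ c ^ 2 := pow_le_pow_left₀ (abs_nonneg _) (h i j) 2
          _ = (Fintype.card n : ℝ) * c ^ 2 := by simp [Finset.card_univ, mul_comm]
      calc (A.mulVec v i) ^ 2 ≤ (∑ j, (A i j) ^ 2) * s2 := h1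
        _ ≤ (Fintype.card n : ℝ) * c ^ 2 * s2 :=
            mul_le_mul_of_nonneg_right h2 hs2nn
    calc ∑ i, (A.mulVec v i) ^ 2 ≤ ∑ _i : m, (Fintype.card n : ℝ) * c ^ 2 * s2 :=
          Finset.sum_le_sum fun i _ => hper i
      _ = (Fintype.card m * Fintype.card n : ℕ) * (c ^ 2 * s2) := by
          simp [Finset.card_univ]; ring
  calc Real.sqrt (∑ i, (A.mulVec v i) ^ 2)
      ≤ Real.sqrt ((Fintype.card m * Fintype.card n : ℕ) * (c ^ 2 * s2)) :=
        Real.sqrt_le_sqrt key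
    _ = Real.sqrt ((Fintype.card m * Fintype.card n : ℕ)) * (c * Real.sqrt s2) := by
        rw [Real.sqrt_mul (by positivity), Real.sqrt_mul (by positivity),
          Real.sqrt_sq hc]
    _ = Real.sqrt ((Fintype.card m * Fintype.card n : ℕ)) * c * Real.sqrt s2 := by ring

lemma specNorm_submatrix_le {m n l o : Type*} [Fintype m] [Fintype n] [Fintype l] [Fintype o]
    [DecidableEq n] [DecidableEq o] [DecidableEq m]
    (A : Matrix m n ℝ) (f : l → m) (g : o → n)
    (hf : Function.Injective f) (hg : Function.Injective g) :
    specNorm (A.submatrix f g) ≤ specNorm A := by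
  refine ContinuousLinearMap.opNorm_le_bound _ (norm_nonneg _) fun x => ?_
  set v : o → ℝ := WithLp.equiv 2 (o → ℝ) x with hv
  have hx : x = (WithLp.equiv 2 (o → ℝ)).symm v := by simp [hv]
  have h2 : (LinearMap.toContinuousLinearMap (Matrix.toEuclideanLin (A.submatrix f g))) x
      = (WithLp.equiv 2 (l → ℝ)).symm ((A.submatrix f g).mulVec v) := by
    rw [hx]; simp [Matrix.toLpLin_toLp, Matrix.toLin'_apply]
  rw [h2, euclid_norm_eq, hx, euclid_norm_eq]
  set w : n → ℝ := fun cc => ∑ j, if g j = cc then v j else 0 with hw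
  have hwg : ∀ j, w (g j) = v j := by
    intro j
    rw [hw]
    simp only []
    rw [Finset.sum_eq_single j]
    · simp
    · intro b _ hb; simp [hg.ne hb]
    · simp
  have hsub : ∀ i, (A.submatrix f g).mulVec v i = A.mulVec w (f i) := by
    intro i
    show ∑ j, A (f i) (g j) * v j = ∑ cc, A (f i) cc * w cc
    calc ∑ j, A (f i) (g j) * v j
        = ∑ j, ∑ cc, (if g j = cc then A (f i) cc * v j else 0) := by
          refine Finset.sum_congr rfl fun j _ => ?_
          rw [Finset.sum_ite_eq]
          simp
      _ = ∑ cc, ∑ j, (if g j = cc then A (f i) cc * v j else 0) := Finset.sum_comm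
      _ = ∑ cc, A (f i) cc * w cc := by
          refine Finset.sum_congr rfl fun cc _ => ?_
          rw [hw, Finset.mul_sum]
          refine Finset.sum_congr rfl fun j _ => ?_
          split <;> simp
  have hw2 : ∑ cc, (w cc) ^ 2 = ∑ j, (v j) ^ 2 := by
    have h0 : ∀ cc ∈ Finset.univ, cc ∉ Finset.univ.image g → (w cc) ^ 2 = 0 := by
      intro cc _ hcc
      have : w cc = 0 := by
        rw [hw]
        refine Finset.sum_eq_zero fun j _ => ?_
        have : g j ≠ cc := fun h => hcc (h ▸ Finset.mem_image_of_mem g (Finset.mem_univ j))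
        simp [this]
      simp [this]
    rw [← Finset.sum_subset (Finset.subset_univ (Finset.univ.image g)) h0,
      Finset.sum_image (fun a _ b _ h => hg h)]
    exact Finset.sum_congr rfl fun j _ => by rw [hwg]
  have hineq : ∑ i, (A.mulVec w (f i)) ^ 2 ≤ ∑ r, (A.mulVec w r) ^ 2 :=
    calc ∑ i, (A.mulVec w (f i)) ^ 2
        = ∑ r ∈ Finset.univ.image f, (A.mulVec w r) ^ 2 :=
          (Finset.sum_image (g := f) (f := fun r => (A.mulVec w r) ^ 2)
            (fun a _ b _ h => hf h)).symm
      _ ≤ ∑ r, (A.mulVec w r) ^ 2 :=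
          Finset.sum_le_sum_of_subset_of_nonneg (Finset.subset_univ _)
            (fun r _ _ => sq_nonneg _)
  calc Real.sqrt (∑ i, ((A.submatrix f g).mulVec v i) ^ 2)
      = Real.sqrt (∑ i, (A.mulVec w (f i)) ^ 2) := by
        congr 1; exact Finset.sum_congr rfl fun i _ => by rw [hsub]
    _ ≤ Real.sqrt (∑ r, (A.mulVec w r) ^ 2) := Real.sqrt_le_sqrt hineq
    _ ≤ specNorm A * Real.sqrt (∑ cc, (w cc) ^ 2) := mulVec_sq_le A w
    _ = specNorm A * Real.sqrt (∑ j, (v j) ^ 2) := by rw [hw2]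

/-- under the spectrum-revealing pivoting condition,
‖Π₁AΠ₂ᵀ − L̂Û‖₂ ≤ √(mn)·f·(k+1)·σ_{k+1}(A).  Here Ā₁₁ is the leading
(k+1)×(k+1) block of the partially factored matrix (a submatrix of Π₁AΠ₂ᵀ),
α is the (1,1) pivot candidate of the Schur complement S, every entry of S
is bounded by |α| in magnitude, and ‖Ā₁₁⁻¹‖_max ≤ f/|α|. -/
theorem srlu_spectral_error_bound {k m' n' : ℕ} (hm : 0 < m') (hn : 0 < n')
    (PA : Matrix (Fin k ⊕ Fin m') (Fin k ⊕ Fin n') ℝ)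
    (Lhat : Matrix (Fin k ⊕ Fin m') (Fin k) ℝ)
    (Uhat : Matrix (Fin k) (Fin k ⊕ Fin n') ℝ)
    (S : Matrix (Fin m') (Fin n') ℝ)
    (hPA : PA = Lhat * Uhat + fromBlocks 0 0 0 S)
    (Abar : Matrix (Fin k ⊕ Fin 1) (Fin k ⊕ Fin 1) ℝ)
    (hAbar : Abar = PA.submatrix (Sum.map id fun _ => (⟨0, hm⟩ : Fin m'))
      (Sum.map id fun _ => (⟨0, hn⟩ : Fin n')))
    (f α : ℝ) (hf : 1 < f)
    (hα : α = S ⟨0, hm⟩ ⟨0, hn⟩) (hα0 : α ≠ 0)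
    (hdet : IsUnit Abar.det)
    (hmax : ∀ i j, |Abar⁻¹ i j| ≤ f / |α|)
    (hpivot : ∀ i j, |S i j| ≤ |α|) :
    specNorm (PA - Lhat * Uhat) ≤
      Real.sqrt (((k + m') * (k + n') : ℕ)) * f * (k + 1) * sval PA (k + 1) := by
  have hαpos : 0 < |α| := abs_pos.mpr hα0
  have hfpos : 0 < f := lt_trans one_pos hf
  -- LHS bound
  have hLU : PA - Lhat * Uhat = fromBlocks 0 0 0 S := by rw [hPA, add_sub_cancel_left]
  have hent : ∀ i j, |(fromBlocks (0 : Matrix (Fin k) (Fin k) ℝ) 0 0 S) i j| ≤ |α| := by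
    rintro (i | i) (j | j) <;> simp [Matrix.fromBlocks] <;> exact hpivot i j
  have hLHS : specNorm (PA - Lhat * Uhat) ≤
      Real.sqrt (((k + m') * (k + n') : ℕ)) * |α| := by
    rw [hLU]
    have h := specNorm_le_card_mul (fromBlocks 0 0 0 S) |α| (abs_nonneg α) hent
    simpa [Fintype.card_sum, Fintype.card_fin] using h
  -- bound on specNorm of Abar⁻¹
  set K : ℝ := ((k : ℝ) + 1) * (f / |α|) with hK
  have hKpos : 0 < K := by positivity
  have hAinv : specNorm Abar⁻¹ ≤ K := by
    have h := specNorm_le_card_mul Abar⁻¹ (f / |α|) (by positivity) hmax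
    have hcard : ((Fintype.card (Fin k ⊕ Fin 1) * Fintype.card (Fin k ⊕ Fin 1) : ℕ) : ℝ)
        = ((k : ℝ) + 1) ^ 2 := by
      simp [Fintype.card_sum, Fintype.card_fin]; push_cast; ring
    rw [hcard, Real.sqrt_sq (by positivity)] at h
    exact h
  -- lower bound on sval
  have hsval : |α| / (((k : ℝ) + 1) * f) ≤ sval PA (k + 1) := by
    refine le_csInf ⟨specNorm (PA - 0), 0, ?_, rfl⟩ ?_
    · simpa using Nat.succ_pos k
    rintro c ⟨B, hB, rfl⟩
    set ρr : Fin k ⊕ Fin 1 → Fin k ⊕ Fin m' :=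
      Sum.map id (fun _ => (⟨0, hm⟩ : Fin m')) with hρrdef
    set ρc : Fin k ⊕ Fin 1 → Fin k ⊕ Fin n' :=
      Sum.map id (fun _ => (⟨0, hn⟩ : Fin n')) with hρcdef
    have hρr : Function.Injective ρr :=
      Function.Injective.sumMap (fun a b h => h) (fun a b _ => Subsingleton.elim a b)
    have hρc : Function.Injective ρc :=
      Function.Injective.sumMap (fun a b h => h) (fun a b _ => Subsingleton.elim a b)
    set B' := B.submatrix ρr ρc with hB'
    have hrank : B'.rank ≤ B.rank := by
      have e1 : ((1 : Matrix (Fin k ⊕ Fin m') (Fin k ⊕ Fin m') ℝ).submatrix ρr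
          (Equiv.refl _)) * B = B.submatrix ρr id := by
        rw [Matrix.one_submatrix_mul]
        rfl
      have e2 : B.submatrix ρr id * ((1 : Matrix (Fin k ⊕ Fin n') (Fin k ⊕ Fin n') ℝ).submatrix
          (Equiv.refl _) ρc) = B' := by
        rw [Matrix.mul_submatrix_one, hB', Matrix.submatrix_submatrix]
        rfl
      calc B'.rank = (((1 : Matrix (Fin k ⊕ Fin m') (Fin k ⊕ Fin m') ℝ).submatrix ρr
              (Equiv.refl _)) * B * ((1 : Matrix (Fin k ⊕ Fin n') (Fin k ⊕ Fin n') ℝ).submatrix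
              (Equiv.refl _) ρc)).rank := by rw [e1, e2]
        _ ≤ (((1 : Matrix (Fin k ⊕ Fin m') (Fin k ⊕ Fin m') ℝ).submatrix ρr
              (Equiv.refl _)) * B).rank := Matrix.rank_mul_le_left _ _
        _ ≤ B.rank := Matrix.rank_mul_le_right _ _
    have hdetB' : B'.det = 0 := by
      by_contra hd
      have hu : IsUnit B' := (Matrix.isUnit_iff_isUnit_det B').mpr (isUnit_iff_ne_zero.mpr hd)
      have hr := B'.rank_of_isUnit hu
      rw [Fintype.card_sum, Fintype.card_fin, Fintype.card_fin] at hr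
      omega
    obtain ⟨v, hv0, hv⟩ := Matrix.exists_mulVec_eq_zero_iff.mpr hdetB'
    have hsubeq : Abar - B' = (PA - B).submatrix ρr ρc := by
      rw [hAbar]
      ext i j
      simp [hB', Matrix.sub_apply]
    set s := Real.sqrt (∑ j, (v j) ^ 2) with hs
    have hspos : 0 < s := by
      apply Real.sqrt_pos.mpr
      obtain ⟨j, hj⟩ := Function.ne_iff.mp hv0
      exact Finset.sum_pos' (fun i _ => sq_nonneg _)
        ⟨j, Finset.mem_univ j, lt_of_le_of_ne (sq_nonneg _) (Ne.symm (pow_ne_zero 2 hj))⟩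
    have h1 : Real.sqrt (∑ i, (Abar.mulVec v i) ^ 2) ≤ specNorm (PA - B) * s := by
      have e1 : Abar.mulVec v = (Abar - B').mulVec v := by
        rw [Matrix.sub_mulVec, hv, sub_zero]
      rw [e1, hsubeq]
      exact le_trans (mulVec_sq_le _ v)
        (mul_le_mul_of_nonneg_right (specNorm_submatrix_le _ _ _ hρr hρc) (Real.sqrt_nonneg _))
    have h2 : s ≤ K * Real.sqrt (∑ i, (Abar.mulVec v i) ^ 2) := by
      have e2 : Abar⁻¹.mulVec (Abar.mulVec v) = v := by
        rw [Matrix.mulVec_mulVec, Matrix.nonsing_inv_mul _ hdet, Matrix.one_mulVec]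
      calc s = Real.sqrt (∑ j, (Abar⁻¹.mulVec (Abar.mulVec v) j) ^ 2) := by rw [e2]
        _ ≤ specNorm Abar⁻¹ * Real.sqrt (∑ i, (Abar.mulVec v i) ^ 2) := mulVec_sq_le _ _
        _ ≤ K * Real.sqrt (∑ i, (Abar.mulVec v i) ^ 2) :=
            mul_le_mul_of_nonneg_right hAinv (Real.sqrt_nonneg _)
    have hcomb : s ≤ K * (specNorm (PA - B) * s) :=
      le_trans h2 (mul_le_mul_of_nonneg_left h1 hKpos.le)
    have hg : 1 ≤ K * specNorm (PA - B) := by nlinarith [hspos, hcomb]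
    have hKα : K * |α| = ((k : ℝ) + 1) * f := by
      rw [hK]; field_simp
    rw [div_le_iff₀ (by positivity)]
    calc |α| = 1 * |α| := (one_mul _).symm
      _ ≤ (K * specNorm (PA - B)) * |α| :=
          mul_le_mul_of_nonneg_right hg (abs_nonneg _)
      _ = specNorm (PA - B) * (K * |α|) := by ring
      _ = specNorm (PA - B) * (((k : ℝ) + 1) * f) := by rw [hKα]
  -- combine
  calc specNorm (PA - Lhat * Uhat)
      ≤ Real.sqrt (((k + m') * (k + n') : ℕ)) * |α| := hLHS
    _ = Real.sqrt (((k + m') * (k + n') : ℕ)) * f * (k + 1) *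
        (|α| / (((k : ℝ) + 1) * f)) := by
        field_simp
    _ ≤ Real.sqrt (((k + m') * (k + n') : ℕ)) * f * (k + 1) * sval PA (k + 1) :=
        mul_le_mul_of_nonneg_left hsval (by positivity)
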